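/- The payoff coefficient vectors of U(θ,α,β) and U(π−θ, 2π−β, π−α), each played as player 1's strategy against an arbitrary player-2 strategy U(θ₂,α₂,β₂), coincide with the corresponding payoff vectors for the row-swapped game; precisely, F(π−θ, θ₂, 2π−β, α₂, π−α, β₂) = (F₃, F₄, F₁, F₂)(θ, θ₂, α, α₂, β, β₂), where Fᵢ denote the four components of the EWL payoff coefficient function. -/
import Mathlib


set_option maxHeartbeats 1000000
open Real

/-- The EWL payoff coefficient vector: coefficients of Δ₀₀, Δ₀₁, Δ₁₀, Δ₁₁. -/
noncomputable def F (θ₁ θ₂ α₁ α₂ β₁ β₂ : ℝ) : ℝ × ℝ × ℝ × ℝ :=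
((Real.cos (α₁ + α₂) * Real.cos (θ₁/2) * Real.cos (θ₂/2)
    + Real.sin (β₁ + β₂) * Real.sin (θ₁/2) * Real.sin (θ₂/2))^2,
 (Real.cos (α₁ - β₂) * Real.cos (θ₁/2) * Real.sin (θ₂/2)
    + Real.sin (α₂ - β₁) * Real.sin (θ₁/2) * Real.cos (θ₂/2))^2,
 (Real.sin (α₁ - β₂) * Real.cos (θ₁/2) * Real.sin (θ₂/2)
    + Real.cos (α₂ - β₁) * Real.sin (θ₁/2) * Real.cos (θ₂/2))^2,
 (Real.sin (α₁ + α₂) * Real.cos (θ₁/2) * Real.cos (θ₂/2)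
    - Real.cos (β₁ + β₂) * Real.sin (θ₁/2) * Real.sin (θ₂/2))^2)

theorem stmt_3 (θ θ₂ α α₂ β β₂ : ℝ) :
    F (π - θ) θ₂ (2*π - β) α₂ (π - α) β₂ =
      ((F θ θ₂ α α₂ β β₂).2.2.1, (F θ θ₂ α α₂ β β₂).2.2.2,
       (F θ θ₂ α α₂ β β₂).1, (F θ θ₂ α α₂ β β₂).2.1) := by
  have h : (π - θ)/2 = π/2 - θ/2 := by ring
  simp only [F, h, Prod.mk.injEq,
    Real.cos_add, Real.sin_add, Real.cos_sub, Real.sin_sub, Real.cos_two_pi,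
    Real.sin_two_pi, Real.cos_pi, Real.sin_pi, Real.cos_pi_div_two, Real.sin_pi_div_two]
  refine ⟨by ring, by ring, by ring, by ring⟩
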